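/- Let Ω be a nonempty convex subset of a locally convex topological vector space X, and let x̄ ∈ Ω. Then x̄ ∈ qri(Ω) if and only if x̄ is a nonsupport point of Ω, i.e., for every x* ∈ X*, if ⟨x*, x − x̄⟩ ≥ 0 for all x ∈ Ω then ⟨x*, x − x̄⟩ = 0 for all x ∈ Ω. -/

import Mathlib

open Set Pointwise Filter Topology

/-- The cone generated by a set `A`: `{t • a | t ≥ 0, a ∈ A}`. -/
def coneGen {X : Type*} [AddCommGroup X] [Module ℝ X] (A : Set X) : Set X :=
  {y | ∃ t : ℝ, 0 ≤ t ∧ ∃ a ∈ A, y = t • a}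

/-- A set is a linear subspace if it is the carrier of a submodule. -/
def IsLinSubspace {X : Type*} [AddCommGroup X] [Module ℝ X] (s : Set X) : Prop :=
  ∃ L : Submodule ℝ X, (L : Set X) = s

/-- Intrinsic relative interior. -/
def iri {X : Type*} [AddCommGroup X] [Module ℝ X] (Ω : Set X) : Set X :=
  {x ∈ Ω | IsLinSubspace (coneGen ((fun y => y - x) '' Ω))}

/-- Quasi-relative interior. -/
def qri {X : Type*} [AddCommGroup X] [Module ℝ X] [TopologicalSpace X] (Ω : Set X) : Set X :=
  {x ∈ Ω | IsLinSubspace (closure (coneGen ((fun y => y - x) '' Ω)))}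

/-- Relative interior in a topological vector space. -/
def ri {X : Type*} [AddCommGroup X] [Module ℝ X] [TopologicalSpace X] (Ω : Set X) : Set X :=
  {x ∈ Ω | ∃ V ∈ nhds x, V ∩ closure ((affineSpan ℝ Ω : Set X)) ⊆ Ω}

/-- Normal cone (functional-analytic version), a subset of the topological dual. -/
def normalCone {X : Type*} [AddCommGroup X] [Module ℝ X] [TopologicalSpace X]
    (Ω : Set X) (xb : X) : Set (X →L[ℝ] ℝ) :=
  {f | ∀ x ∈ Ω, f (x - xb) ≤ 0}

lemma coneGen_smul_mem {X : Type*} [AddCommGroup X] [Module ℝ X] {A : Set X} {t : ℝ}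
    (ht : 0 ≤ t) {x : X} (hx : x ∈ coneGen A) : t • x ∈ coneGen A := by
  obtain ⟨s, hs, a, ha, rfl⟩ := hx
  exact ⟨t * s, mul_nonneg ht hs, a, ha, (mul_smul t s a).symm⟩

lemma subset_coneGen {X : Type*} [AddCommGroup X] [Module ℝ X] {A : Set X} :
    A ⊆ coneGen A := fun a ha => ⟨1, zero_le_one, a, ha, (one_smul ℝ a).symm⟩

lemma coneGen_convex {X : Type*} [AddCommGroup X] [Module ℝ X] {A : Set X}
    (hA : Convex ℝ A) : Convex ℝ (coneGen A) := by
  rintro x ⟨t₁, ht₁, a₁, ha₁, rfl⟩ y ⟨t₂, ht₂, a₂, ha₂, rfl⟩ p q hp hq hpq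
  by_cases hs : p * t₁ + q * t₂ = 0
  · have h1 : p * t₁ = 0 := by nlinarith [mul_nonneg hp ht₁, mul_nonneg hq ht₂]
    have h2 : q * t₂ = 0 := by nlinarith [mul_nonneg hp ht₁, mul_nonneg hq ht₂]
    refine ⟨0, le_refl 0, a₁, ha₁, ?_⟩
    rw [smul_smul, smul_smul, h1, h2]
    simp
  · have hspos : 0 < p * t₁ + q * t₂ := lt_of_le_of_ne (by positivity) (Ne.symm hs)
    refine ⟨p * t₁ + q * t₂, hspos.le,
      (p * t₁ / (p * t₁ + q * t₂)) • a₁ + (q * t₂ / (p * t₁ + q * t₂)) • a₂,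
      hA ha₁ ha₂ (by positivity) (by positivity) (by field_simp), ?_⟩
    rw [smul_add, smul_smul, smul_smul, smul_smul, smul_smul]
    field_simp

/-- `xb ∈ qri Ω` iff `xb` is a nonsupport point of `Ω`. -/
theorem qri_iff_nonsupport {X : Type*} [AddCommGroup X] [Module ℝ X]
    [TopologicalSpace X] [IsTopologicalAddGroup X] [ContinuousSMul ℝ X]
    [LocallyConvexSpace ℝ X]
    (Ω : Set X) (hne : Ω.Nonempty) (hconv : Convex ℝ Ω) (xb : X) (hxb : xb ∈ Ω) :
    xb ∈ qri Ω ↔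
      ∀ f : X →L[ℝ] ℝ, (∀ x ∈ Ω, 0 ≤ f (x - xb)) → ∀ x ∈ Ω, f (x - xb) = 0 := by
  set A : Set X := (fun y => y - xb) '' Ω with hA
  have hAconv : Convex ℝ A := by
    have hEq : A = (fun z => -xb + z) '' Ω := by
      ext y
      simp [hA, sub_eq_neg_add]
    rw [hEq]
    exact hconv.translate _
  have h0A : (0 : X) ∈ coneGen A := by
    obtain ⟨z, hz⟩ := hne
    exact ⟨0, le_refl 0, z - xb, ⟨z, hz, rfl⟩, (zero_smul ℝ _).symm⟩
  constructor
  · rintro ⟨-, L, hL⟩ f hf x hx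
    have hfK : ∀ y ∈ closure (coneGen A), 0 ≤ f y := by
      intro y hy
      have hsub : coneGen A ⊆ {y | 0 ≤ f y} := by
        rintro _ ⟨t, ht, a, ⟨z, hz, rfl⟩, rfl⟩
        simp only [mem_setOf_eq, map_smul, smul_eq_mul]
        exact mul_nonneg ht (hf z hz)
      exact closure_minimal hsub (isClosed_le continuous_const f.continuous) hy
    have h1 : x - xb ∈ closure (coneGen A) :=
      subset_closure (subset_coneGen ⟨x, hx, rfl⟩)
    have h2 : -(x - xb) ∈ closure (coneGen A) := by
      rw [← hL] at h1 ⊢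
      exact neg_mem h1
    have ha := hfK _ h1
    have hb := hfK _ h2
    rw [map_neg] at hb
    linarith
  · intro hns
    refine ⟨hxb, ?_⟩
    set K := closure (coneGen A) with hK
    have hKconv : Convex ℝ K := (coneGen_convex hAconv).closure
    have hKsmul : ∀ t : ℝ, 0 ≤ t → ∀ y ∈ K, t • y ∈ K := by
      intro t ht y hy
      have h1 : (t • ·) '' coneGen A ⊆ coneGen A := by
        rintro _ ⟨z, hz, rfl⟩
        exact coneGen_smul_mem ht hz
      have h2 := image_closure_subset_closure_image
        (f := (t • · : X → X)) (continuous_const_smul t) (s := coneGen A)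
      exact closure_mono h1 (h2 ⟨y, hy, rfl⟩)
    have hKneg : ∀ y ∈ K, -y ∈ K := by
      intro v hv
      by_contra hnv
      obtain ⟨f, u, hfu, huv⟩ :=
        geometric_hahn_banach_closed_point hKconv isClosed_closure hnv
      have hu0 : 0 < u := by
        have := hfu 0 (subset_closure h0A)
        simpa using this
      have hfle : ∀ y ∈ coneGen A, f y ≤ 0 := by
        intro y hy
        by_contra hpos
        push_neg at hpos
        have ht : (0:ℝ) ≤ (u + 1) / f y := by positivity
        have := hfu _ (subset_closure (coneGen_smul_mem ht hy))
        rw [map_smul, smul_eq_mul, div_mul_cancel₀ _ (ne_of_gt hpos)] at this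
        linarith
      have hns' := hns (-f) (by
        intro x hx
        have := hfle (x - xb) (subset_coneGen ⟨x, hx, rfl⟩)
        simpa using this)
      have hfzero : ∀ y ∈ coneGen A, f y = 0 := by
        rintro _ ⟨t, ht, a, ⟨z, hz, rfl⟩, rfl⟩
        have := hns' z hz
        simp only [ContinuousLinearMap.neg_apply, neg_eq_zero] at this
        rw [map_smul, smul_eq_mul, this, mul_zero]
      have hfK0 : ∀ y ∈ K, f y = 0 := by
        intro y hy
        have hsub : coneGen A ⊆ {y | f y = 0} := fun y hy => hfzero y hy
        exact closure_minimal hsub (isClosed_eq f.continuous continuous_const) hy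
      have hv0 : f v = 0 := hfK0 v hv
      rw [map_neg, hv0] at huv
      linarith
    refine ⟨{ carrier := K
              zero_mem' := subset_closure h0A
              add_mem' := ?_
              smul_mem' := ?_ }, rfl⟩
    · intro a b ha hb
      have hmid : (1/2 : ℝ) • a + (1/2 : ℝ) • b ∈ K :=
        hKconv ha hb (by norm_num) (by norm_num) (by norm_num)
      have := hKsmul 2 (by norm_num) _ hmid
      have heq : (2:ℝ) • ((1/2 : ℝ) • a + (1/2 : ℝ) • b) = a + b := by
        rw [smul_add, smul_smul, smul_smul]
        norm_num
      rwa [heq] at this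
    · intro c y hy
      rcases le_or_gt 0 c with hc | hc
      · exact hKsmul c hc y hy
      · have : c • y = (-c) • (-y) := by simp
        rw [this]
        exact hKsmul (-c) (by linarith) _ (hKneg y hy)
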